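/- With the decomposition of a closed real subspace L of a complex Hilbert space H as above, the real subspace Ls := La + Lf is a standard subspace of Ls⊕ := La⊕ ⊕ Lf⊕, i.e.: (i) Ls ∩ iLs = {0}; and (ii) Ls + iLs is dense in La⊕ ⊕ Lf⊕. -/

import Mathlib

attribute [local instance] InnerProductSpace.complexToReal

variable {H : Type*} [NormedAddCommGroup H] [InnerProductSpace ℂ H]

/-- Multiplication by `i`, as a real-linear map on a complex Hilbert space. -/
noncomputable def mulI : H →ₗ[ℝ] H where
  toFun x := Complex.I • x
  map_add' x y := by simp [smul_add]
  map_smul' r x := smul_comm Complex.I r x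

/-- The symplectic complement `L' = {g | Im⟪f,g⟫ = 0 ∀ f ∈ L}` of a real subspace `L`,
as a real subspace. -/
noncomputable def sympCompl (L : Submodule ℝ H) : Submodule ℝ H where
  carrier := {g | ∀ f ∈ L, (inner ℂ f g : ℂ).im = 0}
  add_mem' := by
    intro a b ha hb f hf
    rw [inner_add_right]
    simp [ha f hf, hb f hf]
  zero_mem' := by
    intro f hf
    simp
  smul_mem' := by
    intro r g hg f hf
    rw [RCLike.real_smul_eq_coe_smul (K := ℂ), inner_smul_right]
    simp [Complex.mul_im, hg f hf]

/-- The nonseparating part `L∞ = L ∩ iL`. -/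
noncomputable def nonsepPart (L : Submodule ℝ H) : Submodule ℝ H :=
  L ⊓ L.map mulI

/-- The abelian part `La = L ∩ L'`. -/
noncomputable def abelPart (L : Submodule ℝ H) : Submodule ℝ H :=
  L ⊓ sympCompl L

/-- `La⊕ = La + iLa`. -/
noncomputable def abelPartC (L : Submodule ℝ H) : Submodule ℝ H :=
  abelPart L ⊔ (abelPart L).map mulI

/-- `L₀ = (closure of (L + iL))ᗮ`, orthogonal complement w.r.t. the real inner product. -/
noncomputable def zeroPart (L : Submodule ℝ H) : Submodule ℝ H :=
  ((L ⊔ L.map mulI).topologicalClosure)ᗮ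

/-- `Lf⊕ = (L₀ ⊕ La⊕ ⊕ L∞)ᗮ`. -/
noncomputable def factPartC (L : Submodule ℝ H) : Submodule ℝ H :=
  (zeroPart L ⊔ abelPartC L ⊔ nonsepPart L)ᗮ

/-- The factorial part `Lf = Lf⊕ ∩ L`. -/
noncomputable def factPart (L : Submodule ℝ H) : Submodule ℝ H :=
  factPartC L ⊓ L

/-! ### Auxiliary lemmas -/

lemma mulI_apply (x : H) : mulI x = Complex.I • x := rfl

lemma mulI_mulI (x : H) : mulI (mulI x) = -x := by
  simp only [mulI_apply, smul_smul, Complex.I_mul_I, neg_one_smul]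

lemma map_mulI_map_mulI (U : Submodule ℝ H) : (U.map mulI).map mulI = U := by
  ext x
  simp only [Submodule.mem_map]
  constructor
  · rintro ⟨y, ⟨z, hz, rfl⟩, rfl⟩
    rw [mulI_mulI]
    exact U.neg_mem hz
  · intro hx
    exact ⟨mulI (-x), ⟨-x, U.neg_mem hx, rfl⟩, by rw [mulI_mulI, neg_neg]⟩

lemma smulI_mem_of_map_eq {U : Submodule ℝ H} (h : U.map mulI = U) {x : H} (hx : x ∈ U) :
    Complex.I • x ∈ U := h ▸ ⟨x, hx, rfl⟩

lemma isClosed_map_mulI {U : Submodule ℝ H} (hU : IsClosed (U : Set H)) :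
    IsClosed ((U.map mulI : Submodule ℝ H) : Set H) := by
  have hset : ((U.map mulI : Submodule ℝ H) : Set H)
      = (fun x : H => Complex.I • x) ⁻¹' (U : Set H) := by
    ext x
    simp only [Set.mem_preimage, SetLike.mem_coe, Submodule.mem_map]
    constructor
    · rintro ⟨y, hy, rfl⟩
      rw [mulI_apply, smul_smul, Complex.I_mul_I, neg_one_smul]
      exact U.neg_mem hy
    · intro hx
      refine ⟨-(Complex.I • x), U.neg_mem hx, ?_⟩
      rw [mulI_apply, smul_neg, smul_smul, Complex.I_mul_I, neg_one_smul, neg_neg]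
  rw [hset]
  exact hU.preimage (continuous_const_smul _)

lemma rinner_eq_re (x y : H) : (inner ℝ x y : ℝ) = (inner ℂ x y : ℂ).re := rfl

lemma rinner_smulI_right (x y : H) : (inner ℝ x (Complex.I • y) : ℝ) = -(inner ℂ x y : ℂ).im := by
  rw [rinner_eq_re, inner_smul_right]
  simp

lemma rinner_smulI_left (x y : H) : (inner ℝ (Complex.I • x) y : ℝ) = (inner ℂ x y : ℂ).im := by
  rw [rinner_eq_re, inner_smul_left]
  simp

lemma rinner_smulI_smulI (x y : H) :
    (inner ℝ (Complex.I • x) (Complex.I • y) : ℝ) = (inner ℝ x y : ℝ) := by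
  rw [rinner_eq_re, rinner_eq_re, inner_smul_left, inner_smul_right, Complex.conj_I]
  ring_nf
  rw [Complex.I_sq]
  ring_nf

lemma map_mulI_orthogonal {U : Submodule ℝ H} (h : U.map mulI = U) : Uᗮ.map mulI = Uᗮ := by
  have key : ∀ V : Submodule ℝ H, V.map mulI = V → Vᗮ.map mulI ≤ Vᗮ := by
    intro V hV
    rintro x ⟨g, hg, rfl⟩
    rw [Submodule.mem_orthogonal]
    intro u hu
    have hu' : Complex.I • (-u) ∈ V := smulI_mem_of_map_eq hV (V.neg_mem hu)
    have h0 : (inner ℝ (Complex.I • (-u)) g : ℝ) = 0 := (Submodule.mem_orthogonal _ g).mp hg _ hu'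
    calc (inner ℝ u (mulI g) : ℝ) = -(inner ℂ u g : ℂ).im := by rw [mulI_apply, rinner_smulI_right]
    _ = (inner ℝ (Complex.I • (-u)) g : ℝ) := by rw [rinner_smulI_left, inner_neg_left]; simp
    _ = 0 := h0
  refine le_antisymm (key U h) ?_
  have h2 := Submodule.map_mono (f := mulI) (key U h)
  rwa [map_mulI_map_mulI] at h2

lemma map_mulI_topologicalClosure {U : Submodule ℝ H} (h : U.map mulI = U) :
    U.topologicalClosure.map mulI = U.topologicalClosure := by
  have key : ∀ V : Submodule ℝ H, V.map mulI = V →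
      V.topologicalClosure.map mulI ≤ V.topologicalClosure := by
    intro V hV
    rintro x ⟨y, hy, rfl⟩
    have hy' : y ∈ closure (V : Set H) := hy
    have h1 : mulI y ∈ closure ((fun z : H => Complex.I • z) '' (V : Set H)) :=
      image_closure_subset_closure_image (continuous_const_smul _) ⟨y, hy', rfl⟩
    have h2 : (fun z : H => Complex.I • z) '' (V : Set H) ⊆ (V : Set H) := by
      rintro _ ⟨u, hu, rfl⟩
      exact smulI_mem_of_map_eq hV hu
    exact closure_mono h2 h1
  refine le_antisymm (key U h) ?_
  have h2 := Submodule.map_mono (f := mulI) (key U h)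
  rwa [map_mulI_map_mulI] at h2

lemma mulI_injective : Function.Injective (mulI : H →ₗ[ℝ] H) := by
  intro x y hxy
  have : mulI (mulI x) = mulI (mulI y) := by rw [hxy]
  rw [mulI_mulI, mulI_mulI] at this
  exact neg_injective this

lemma map_mulI_nonsepPart (L : Submodule ℝ H) : (nonsepPart L).map mulI = nonsepPart L := by
  unfold nonsepPart
  rw [Submodule.map_inf _ mulI_injective, map_mulI_map_mulI, inf_comm]

lemma map_mulI_abelPartC (L : Submodule ℝ H) : (abelPartC L).map mulI = abelPartC L := by
  unfold abelPartC
  rw [Submodule.map_sup, map_mulI_map_mulI, sup_comm]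

lemma map_mulI_zeroPart (L : Submodule ℝ H) : (zeroPart L).map mulI = zeroPart L := by
  unfold zeroPart
  apply map_mulI_orthogonal
  apply map_mulI_topologicalClosure
  rw [Submodule.map_sup, map_mulI_map_mulI, sup_comm]

lemma map_mulI_factPartC (L : Submodule ℝ H) : (factPartC L).map mulI = factPartC L := by
  unfold factPartC
  apply map_mulI_orthogonal
  rw [Submodule.map_sup, Submodule.map_sup, map_mulI_zeroPart, map_mulI_abelPartC,
    map_mulI_nonsepPart]

lemma abelPartC_le_bigK (L : Submodule ℝ H) :
    abelPartC L ≤ zeroPart L ⊔ abelPartC L ⊔ nonsepPart L :=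
  le_sup_right.trans le_sup_left

lemma nonsepPart_le_bigK (L : Submodule ℝ H) :
    nonsepPart L ≤ zeroPart L ⊔ abelPartC L ⊔ nonsepPart L := le_sup_right

lemma zeroPart_le_bigK (L : Submodule ℝ H) :
    zeroPart L ≤ zeroPart L ⊔ abelPartC L ⊔ nonsepPart L := le_sup_left.trans le_sup_left

/-- The inner product of an element of `L` with `i` times an element of `L'` vanishes. -/
lemma rinner_L_smulI_sympCompl {L : Submodule ℝ H} {f a : H} (hf : f ∈ L)
    (ha : a ∈ sympCompl L) : (inner ℝ f (Complex.I • a) : ℝ) = 0 := by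
  rw [rinner_smulI_right, ha f hf, neg_zero]

lemma rinner_smulIL_sympCompl {L : Submodule ℝ H} {f a : H} (hf : f ∈ L)
    (ha : a ∈ sympCompl L) : (inner ℝ (Complex.I • f) a : ℝ) = 0 := by
  rw [rinner_smulI_left]
  exact ha f hf

lemma im_inner_left_sympCompl {L : Submodule ℝ H} {f a : H} (hf : f ∈ L)
    (ha : a ∈ sympCompl L) : (inner ℂ a f : ℂ).im = 0 := by
  rw [← inner_conj_symm, Complex.conj_im, ha f hf, neg_zero]

/-- A sum of two orthogonal closed subspaces is closed. -/
lemma isClosed_sup_of_orth [CompleteSpace H] {U V : Submodule ℝ H}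
    (hU : IsClosed (U : Set H)) (hV : IsClosed (V : Set H)) (hUV : V ≤ Uᗮ) :
    IsClosed ((U ⊔ V : Submodule ℝ H) : Set H) := by
  haveI : CompleteSpace U := hU.completeSpace_coe
  set P : H →L[ℝ] H := U.subtypeL.comp U.orthogonalProjectionOnto with hPdef
  have hPmem : ∀ s ∈ (U ⊔ V : Submodule ℝ H), P s ∈ U ∧ s - P s ∈ V := by
    intro s hs
    obtain ⟨u, hu, v, hv, rfl⟩ := Submodule.mem_sup.mp hs
    have h1 : P (u + v) = u := by
      have e1 : U.orthogonalProjectionOnto u = ⟨u, hu⟩ :=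
        U.orthogonalProjectionOnto_mem_subspace_eq_self ⟨u, hu⟩
      simp only [hPdef, ContinuousLinearMap.comp_apply, Submodule.subtypeL_apply, map_add,
        Submodule.coe_add, e1,
        Submodule.orthogonalProjectionOnto_apply_of_mem_orthogonal (hUV hv),
        ZeroMemClass.coe_zero, add_zero]
    refine ⟨?_, ?_⟩
    · rw [h1]; exact hu
    · rw [h1, add_sub_cancel_left]; exact hv
  refine isClosed_of_closure_subset ?_
  intro x hx
  have hPx : P x ∈ closure (P '' ((U ⊔ V : Submodule ℝ H) : Set H)) :=
    image_closure_subset_closure_image P.continuous ⟨x, hx, rfl⟩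
  have hPxU : P x ∈ U := by
    have hsub : P '' ((U ⊔ V : Submodule ℝ H) : Set H) ⊆ (U : Set H) := by
      rintro _ ⟨s, hs, rfl⟩
      exact (hPmem s hs).1
    have := closure_mono hsub hPx
    rwa [hU.closure_eq] at this
  set Q : H →L[ℝ] H := ContinuousLinearMap.id ℝ H - P with hQdef
  have hQx : Q x ∈ closure (Q '' ((U ⊔ V : Submodule ℝ H) : Set H)) :=
    image_closure_subset_closure_image Q.continuous ⟨x, hx, rfl⟩
  have hQxV : Q x ∈ V := by
    have hsub : Q '' ((U ⊔ V : Submodule ℝ H) : Set H) ⊆ (V : Set H) := by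
      rintro _ ⟨s, hs, rfl⟩
      exact (hPmem s hs).2
    have := closure_mono hsub hQx
    rwa [hV.closure_eq] at this
  have hxeq : x = P x + Q x := by
    simp [hQdef]
  rw [SetLike.mem_coe, hxeq]
  exact Submodule.add_mem_sup hPxU hQxV

lemma isClosed_sympCompl (L : Submodule ℝ H) : IsClosed ((sympCompl L : Submodule ℝ H) : Set H) := by
  have hset : ((sympCompl L : Submodule ℝ H) : Set H)
      = ⋂ f ∈ (L : Set H), {g : H | (inner ℂ f g : ℂ).im = 0} := by
    ext g
    simp only [SetLike.mem_coe, Set.mem_iInter, Set.mem_setOf_eq]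
    exact ⟨fun h f hf => h f hf, fun h f hf => h f hf⟩
  rw [hset]
  refine isClosed_biInter fun f _ => isClosed_eq ?_ continuous_const
  exact Complex.continuous_im.comp (continuous_const.inner continuous_id)

lemma isClosed_abelPart {L : Submodule ℝ H} (hL : IsClosed (L : Set H)) :
    IsClosed ((abelPart L : Submodule ℝ H) : Set H) := by
  have : ((abelPart L : Submodule ℝ H) : Set H) = (L : Set H) ∩ (sympCompl L : Set H) := rfl
  rw [this]
  exact hL.inter (isClosed_sympCompl L)

lemma isClosed_nonsepPart {L : Submodule ℝ H} (hL : IsClosed (L : Set H)) :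
    IsClosed ((nonsepPart L : Submodule ℝ H) : Set H) := by
  have : ((nonsepPart L : Submodule ℝ H) : Set H)
      = (L : Set H) ∩ ((L.map mulI : Submodule ℝ H) : Set H) := rfl
  rw [this]
  exact hL.inter (isClosed_map_mulI hL)

lemma map_mulI_abelPart_le_orth (L : Submodule ℝ H) :
    (abelPart L).map mulI ≤ (abelPart L)ᗮ := by
  rintro _ ⟨a, ha, rfl⟩
  rw [Submodule.mem_orthogonal]
  intro b hb
  rw [mulI_apply]
  exact rinner_L_smulI_sympCompl (Submodule.mem_inf.mp hb).1 (Submodule.mem_inf.mp ha).2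

lemma isClosed_abelPartC [CompleteSpace H] {L : Submodule ℝ H} (hL : IsClosed (L : Set H)) :
    IsClosed ((abelPartC L : Submodule ℝ H) : Set H) :=
  isClosed_sup_of_orth (isClosed_abelPart hL) (isClosed_map_mulI (isClosed_abelPart hL))
    (map_mulI_abelPart_le_orth L)

/-- Any element of `L` is orthogonal to `L₀`. -/
lemma rinner_zeroPart_L {L : Submodule ℝ H} {u w : H} (hu : u ∈ zeroPart L) (hw : w ∈ L) :
    (inner ℝ u w : ℝ) = 0 := by
  have hwM : w ∈ (L ⊔ L.map mulI).topologicalClosure :=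
    Submodule.le_topologicalClosure _ (Submodule.mem_sup_left hw)
  exact Submodule.inner_left_of_mem_orthogonal hwM hu

/-- Decomposition `L = La ⊕ L∞ ⊕ Lf`. -/
lemma decompose [CompleteSpace H] {L : Submodule ℝ H} (hL : IsClosed (L : Set H)) {f : H}
    (hf : f ∈ L) : ∃ a ∈ abelPart L, ∃ z ∈ nonsepPart L, f - a - z ∈ factPart L := by
  haveI : CompleteSpace (abelPart L) := (isClosed_abelPart hL).completeSpace_coe
  haveI : CompleteSpace (nonsepPart L) := (isClosed_nonsepPart hL).completeSpace_coe
  obtain ⟨a, ha, r, hr, hfr⟩ := (abelPart L).exists_add_mem_mem_orthogonal f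
  obtain ⟨z, hz, w, hw, hrw⟩ := (nonsepPart L).exists_add_mem_mem_orthogonal r
  refine ⟨a, ha, z, hz, ?_⟩
  have haL : a ∈ L := (Submodule.mem_inf.mp ha).1
  have hzL : z ∈ L := (Submodule.mem_inf.mp hz).1
  have hwL : f - a - z ∈ L := L.sub_mem (L.sub_mem hf haL) hzL
  have hw_eq : f - a - z = w := by rw [hfr, hrw]; abel
  rw [factPart, Submodule.mem_inf]
  refine ⟨?_, hwL⟩
  rw [factPartC, Submodule.mem_orthogonal]
  intro u hu
  obtain ⟨u', hu', uz, huz, rfl⟩ := Submodule.mem_sup.mp hu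
  obtain ⟨u0, hu0, ua, hua, rfl⟩ := Submodule.mem_sup.mp hu'
  have h0 : (inner ℝ u0 (f - a - z) : ℝ) = 0 := rinner_zeroPart_L hu0 hwL
  have hZ : (inner ℝ uz (f - a - z) : ℝ) = 0 := by
    rw [hw_eq]
    exact Submodule.inner_right_of_mem_orthogonal huz hw
  have hA : (inner ℝ ua (f - a - z) : ℝ) = 0 := by
    obtain ⟨b, hb, ib', hib', rfl⟩ := Submodule.mem_sup.mp hua
    obtain ⟨b', hb', rfl⟩ := hib'
    have hB : (inner ℝ b (f - a - z) : ℝ) = 0 := by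
      have h1 : (inner ℝ b r : ℝ) = 0 := Submodule.inner_right_of_mem_orthogonal hb hr
      have h2 : (inner ℝ b z : ℝ) = 0 := by
        obtain ⟨y, hy, rfl⟩ := (Submodule.mem_inf.mp hz).2
        rw [mulI_apply, rinner_smulI_right, im_inner_left_sympCompl hy
          (Submodule.mem_inf.mp hb).2, neg_zero]
      have : f - a - z = r - z := by rw [hfr]; abel
      rw [this, inner_sub_right, h1, h2, sub_zero]
    have hB' : (inner ℝ (mulI b') (f - a - z) : ℝ) = 0 := by
      rw [mulI_apply, real_inner_comm]
      exact rinner_L_smulI_sympCompl hwL (Submodule.mem_inf.mp hb').2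
    rw [inner_add_left, hB, hB', add_zero]
  rw [inner_add_left, inner_add_left, h0, hA, hZ, add_zero, add_zero]

/-- The key density statement: `Lf⊕` is contained in the double orthogonal complement
(i.e. the closure) of `Ls ⊔ iLs`. -/
lemma factPartC_le_biorth [CompleteSpace H] {L : Submodule ℝ H} (hL : IsClosed (L : Set H)) :
    factPartC L ≤ ((abelPart L ⊔ factPart L) ⊔ (abelPart L ⊔ factPart L).map mulI)ᗮᗮ := by
  intro x hx
  rw [Submodule.mem_orthogonal]
  intro g hg
  haveI : CompleteSpace (factPartC L) :=
    (Submodule.isClosed_orthogonal _).completeSpace_coe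
  obtain ⟨h, hh, k, hk, hgdec⟩ := (factPartC L).exists_add_mem_mem_orthogonal g
  -- h is orthogonal to Lf and i·Lf
  have hLf : ∀ w ∈ factPart L, (inner ℝ w h : ℝ) = 0 := by
    intro w hw
    have h1 : (inner ℝ w g : ℝ) = 0 :=
      Submodule.inner_right_of_mem_orthogonal (Submodule.mem_sup_left (Submodule.mem_sup_right hw)) hg
    have h2 : (inner ℝ w k : ℝ) = 0 :=
      Submodule.inner_right_of_mem_orthogonal ((inf_le_left : factPart L ≤ factPartC L) hw) hk
    have : (inner ℝ w h : ℝ) = (inner ℝ w g : ℝ) - (inner ℝ w k : ℝ) := by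
      rw [hgdec, inner_add_right]; ring
    rw [this, h1, h2, sub_zero]
  have hiLf : ∀ w ∈ factPart L, (inner ℝ (Complex.I • w) h : ℝ) = 0 := by
    intro w hw
    have hmem : Complex.I • w ∈ (abelPart L ⊔ factPart L).map mulI :=
      ⟨w, Submodule.mem_sup_right hw, rfl⟩
    have h1 : (inner ℝ (Complex.I • w) g : ℝ) = 0 :=
      Submodule.inner_right_of_mem_orthogonal (Submodule.mem_sup_right hmem) hg
    have hmem2 : Complex.I • w ∈ factPartC L :=
      smulI_mem_of_map_eq (map_mulI_factPartC L)
        ((inf_le_left : factPart L ≤ factPartC L) hw)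
    have h2 : (inner ℝ (Complex.I • w) k : ℝ) = 0 :=
      Submodule.inner_right_of_mem_orthogonal hmem2 hk
    have : (inner ℝ (Complex.I • w) h : ℝ)
        = (inner ℝ (Complex.I • w) g : ℝ) - (inner ℝ (Complex.I • w) k : ℝ) := by
      rw [hgdec, inner_add_right]; ring
    rw [this, h1, h2, sub_zero]
  -- h is orthogonal to L and iL
  have hL' : ∀ f ∈ L, (inner ℝ f h : ℝ) = 0 := by
    intro f hf
    obtain ⟨a, ha, z, hz, hw⟩ := decompose hL hf
    have hfeq : f = a + z + (f - a - z) := by abel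
    rw [hfeq, inner_add_left, inner_add_left]
    have h1 : (inner ℝ a h : ℝ) = 0 :=
      Submodule.inner_right_of_mem_orthogonal (abelPartC_le_bigK L (Submodule.mem_sup_left ha)) hh
    have h2 : (inner ℝ z h : ℝ) = 0 :=
      Submodule.inner_right_of_mem_orthogonal (nonsepPart_le_bigK L hz) hh
    rw [h1, h2, hLf _ hw, add_zero, add_zero]
  have hiL' : ∀ f ∈ L, (inner ℝ (Complex.I • f) h : ℝ) = 0 := by
    intro f hf
    obtain ⟨a, ha, z, hz, hw⟩ := decompose hL hf
    have hfeq : Complex.I • f = Complex.I • a + Complex.I • z + Complex.I • (f - a - z) := by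
      rw [← smul_add, ← smul_add]; congr 1; abel
    rw [hfeq, inner_add_left, inner_add_left]
    have h1 : (inner ℝ (Complex.I • a) h : ℝ) = 0 :=
      Submodule.inner_right_of_mem_orthogonal
        (abelPartC_le_bigK L (Submodule.mem_sup_right ⟨a, ha, rfl⟩)) hh
    have h2 : (inner ℝ (Complex.I • z) h : ℝ) = 0 :=
      Submodule.inner_right_of_mem_orthogonal
        (nonsepPart_le_bigK L (smulI_mem_of_map_eq (map_mulI_nonsepPart L) hz)) hh
    rw [h1, h2, hiLf _ hw, add_zero, add_zero]
  -- hence h ∈ L₀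
  have hhzero : h ∈ zeroPart L := by
    rw [zeroPart, Submodule.mem_orthogonal]
    intro u hu
    have hsub : ((L ⊔ L.map mulI : Submodule ℝ H) : Set H) ⊆ {v : H | (inner ℝ v h : ℝ) = 0} := by
      intro v hv
      obtain ⟨f, hf, iy, hiy, rfl⟩ := Submodule.mem_sup.mp hv
      obtain ⟨y, hy, rfl⟩ := hiy
      have : (inner ℝ (mulI y) h : ℝ) = 0 := hiL' y hy
      simp only [Set.mem_setOf_eq, inner_add_left, hL' f hf, this, add_zero]
    have hcl : IsClosed {v : H | (inner ℝ v h : ℝ) = 0} :=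
      isClosed_eq (continuous_id.inner continuous_const) continuous_const
    have hsub2 : ((L ⊔ L.map mulI).topologicalClosure : Set H)
        ⊆ {v : H | (inner ℝ v h : ℝ) = 0} := by
      rw [Submodule.topologicalClosure_coe]
      exact closure_minimal hsub hcl
    exact hsub2 hu
  -- h = 0
  have hh0 : h = 0 := by
    have : (inner ℝ h h : ℝ) = 0 :=
      Submodule.inner_right_of_mem_orthogonal (zeroPart_le_bigK L hhzero) hh
    exact inner_self_eq_zero.mp this
  -- conclude
  rw [hgdec, hh0, zero_add]
  exact Submodule.inner_left_of_mem_orthogonal hx hk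

/-- With the decomposition of a closed real subspace `L` of a complex Hilbert space `H` as
above, `Ls := La + Lf` is a standard subspace of `Ls⊕ := La⊕ ⊕ Lf⊕`:
(i) `Ls ∩ iLs = {0}`; (ii) `Ls + iLs` is dense in `La⊕ ⊕ Lf⊕`. -/
theorem standard_part_is_standard [CompleteSpace H]
    (L : Submodule ℝ H) (hL : IsClosed (L : Set H)) :
    ((abelPart L ⊔ factPart L) ⊓ (abelPart L ⊔ factPart L).map mulI = ⊥) ∧
    (((abelPart L ⊔ factPart L) ⊔ (abelPart L ⊔ factPart L).map mulI).topologicalClosure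
      = abelPartC L ⊔ factPartC L) := by
  constructor
  · -- part (i)
    rw [Submodule.eq_bot_iff]
    intro x hx
    obtain ⟨hx1, hx2⟩ := Submodule.mem_inf.mp hx
    obtain ⟨a, ha, w, hw, rfl⟩ := Submodule.mem_sup.mp hx1
    obtain ⟨y, hy, hxy⟩ := hx2
    obtain ⟨a', ha', w', hw', rfl⟩ := Submodule.mem_sup.mp hy
    have hxy' : Complex.I • a' + Complex.I • w' = a + w := by
      rw [← hxy, map_add]; rfl
    have hwfC : w ∈ factPartC L := (Submodule.mem_inf.mp hw).1
    have hwL : w ∈ L := (Submodule.mem_inf.mp hw).2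
    have hwfC' : w' ∈ factPartC L := (Submodule.mem_inf.mp hw').1
    have hwL' : w' ∈ L := (Submodule.mem_inf.mp hw').2
    -- the common element of La⊕ and Lf⊕ vanishes
    have hva : a - Complex.I • a' ∈ abelPartC L :=
      Submodule.sub_mem _ (Submodule.mem_sup_left ha) (Submodule.mem_sup_right ⟨a', ha', rfl⟩)
    have hveq : a - Complex.I • a' = Complex.I • w' - w := by
      rw [sub_eq_sub_iff_add_eq_add, ← hxy']
      abel
    have hvf : a - Complex.I • a' ∈ factPartC L := by
      rw [hveq]
      exact Submodule.sub_mem _ (smulI_mem_of_map_eq (map_mulI_factPartC L) hwfC') hwfC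
    have hv0 : a - Complex.I • a' = 0 := by
      have : (inner ℝ (a - Complex.I • a') (a - Complex.I • a') : ℝ) = 0 :=
        Submodule.inner_right_of_mem_orthogonal (abelPartC_le_bigK L hva) hvf
      exact inner_self_eq_zero.mp this
    have haa : a = Complex.I • a' := by rwa [sub_eq_zero] at hv0
    have hww : w = Complex.I • w' := by
      have := hxy'
      rw [← haa] at this
      exact (add_left_cancel this).symm
    -- a = 0
    have ha'0 : a' = 0 := by
      have hinner : (inner ℂ a' a' : ℂ) = 0 := by
        have haL' : a' ∈ L := (Submodule.mem_inf.mp ha').1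
        have him : (inner ℂ a' a' : ℂ).im = 0 := (Submodule.mem_inf.mp ha').2 a' haL'
        have hre : (inner ℂ a' a' : ℂ).re = 0 := by
          have h2 := (Submodule.mem_inf.mp ha).2 a' haL'
          rw [haa, inner_smul_right] at h2
          simpa using h2
        exact Complex.ext hre him
      exact inner_self_eq_zero.mp hinner
    have ha0 : a = 0 := by rw [haa, ha'0, smul_zero]
    -- w = 0
    have hw0 : w = 0 := by
      have hwN : w ∈ nonsepPart L := by
        rw [nonsepPart, Submodule.mem_inf]
        exact ⟨hwL, ⟨w', hwL', hww.symm⟩⟩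
      have : (inner ℝ w w : ℝ) = 0 :=
        Submodule.inner_right_of_mem_orthogonal (nonsepPart_le_bigK L hwN) hwfC
      exact inner_self_eq_zero.mp this
    rw [ha0, hw0, add_zero]
  · -- part (ii)
    apply le_antisymm
    · apply Submodule.topologicalClosure_minimal
      · apply sup_le
        · apply sup_le
          · exact le_trans le_sup_left le_sup_left
          · exact le_trans inf_le_left le_sup_right
        · rw [Submodule.map_sup]
          apply sup_le
          · exact le_trans le_sup_right le_sup_left
          · refine le_trans ?_ le_sup_right
            rw [← map_mulI_factPartC L]
            exact Submodule.map_mono inf_le_left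
      · exact isClosed_sup_of_orth (isClosed_abelPartC hL) (Submodule.isClosed_orthogonal _)
          (Submodule.orthogonal_le (abelPartC_le_bigK L))
    · apply sup_le
      · refine le_trans ?_ (Submodule.le_topologicalClosure _)
        apply sup_le
        · exact le_trans le_sup_left le_sup_left
        · refine le_trans ?_ le_sup_right
          exact Submodule.map_mono le_sup_left
      · rw [← Submodule.orthogonal_orthogonal_eq_closure]
        exact factPartC_le_biorth hL
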